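/- Consider the stochastic system e_{t+1} = A(e_t)e_t + ξ'_t with filtration F_t, where (i) E[ξ'_t | F_t] = 0 and E[ξ'ᵀ_t P ξ'_t | F_t] ≤ σ_t² a.s. with σ_t² → 0, (ii) there is a symmetric positive definite P and continuous c: ℝ^p → [0,1) with A(e)ᵀ P A(e) ⪯ (1-c(e))P for all e, and (iii) there is a convex f: ℝ_{≥0} → ℝ_{≥0} with f(0)=0, f(r)>0 for r>0, and c(e)V(e) ≥ f(V(e)) where V(e)=eᵀPe. Then for every δ > 0, limsup_{t→∞} P(‖e_t‖ > δ) = 0. -/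

import Mathlib

open MeasureTheory Matrix Filter

section nmc_aux
variable {n : ℕ} {P : Matrix (Fin n) (Fin n) ℝ}

lemma nmc_expand (x y : Fin n → ℝ) :
    (x + y) ⬝ᵥ P *ᵥ (x + y) = x ⬝ᵥ P *ᵥ x + x ⬝ᵥ P *ᵥ y + y ⬝ᵥ P *ᵥ x + y ⬝ᵥ P *ᵥ y := by
  simp [Matrix.mulVec_add, dotProduct_add, add_dotProduct]; ring

lemma nmc_smul (r t : ℝ) (x y : Fin n → ℝ) :
    (r • x) ⬝ᵥ P *ᵥ (t • y) = r * t * (x ⬝ᵥ P *ᵥ y) := by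
  simp [Matrix.mulVec_smul, dotProduct_smul, smul_dotProduct, smul_eq_mul]; ring

lemma nmc_symm (hP : P.PosDef) (x y : Fin n → ℝ) : x ⬝ᵥ P *ᵥ y = y ⬝ᵥ P *ᵥ x := by
  have h : Pᵀ = P := by simpa using hP.isHermitian.eq
  rw [Matrix.dotProduct_mulVec, ← Matrix.mulVec_transpose, h, dotProduct_comm]

lemma nmc_nonneg (hP : P.PosDef) (x : Fin n → ℝ) : 0 ≤ x ⬝ᵥ P *ᵥ x := by
  simpa using hP.posSemidef.dotProduct_mulVec_nonneg x

lemma nmc_young (hP : P.PosDef) {s : ℝ} (hs : 0 < s) (u v : Fin n → ℝ) :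
    (u + v) ⬝ᵥ P *ᵥ (u + v) ≤
      (1 + s^2) * (u ⬝ᵥ P *ᵥ u) + (1 + (s^2)⁻¹) * (v ⬝ᵥ P *ᵥ v) := by
  have hsne : s ≠ 0 := ne_of_gt hs
  have h0 : (0:ℝ) ≤ (s • u + (-s⁻¹) • v) ⬝ᵥ P *ᵥ (s • u + (-s⁻¹) • v) := nmc_nonneg hP _
  rw [nmc_expand, nmc_smul, nmc_smul, nmc_smul, nmc_smul, nmc_symm hP v u] at h0
  rw [nmc_expand, nmc_symm hP v u]
  have h1 : s * -s⁻¹ = -1 := by field_simp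
  have h2 : -s⁻¹ * -s⁻¹ = (s ^ 2)⁻¹ := by field_simp
  have h1' : -s⁻¹ * s = -1 := by field_simp
  have hss : s * s = s ^ 2 := (sq s).symm
  rw [h1, h1', h2, hss] at h0
  linarith

lemma nmc_sub (hP : P.PosDef) (u v : Fin n → ℝ) :
    (u - v) ⬝ᵥ P *ᵥ (u - v) ≤ 2 * (u ⬝ᵥ P *ᵥ u) + 2 * (v ⬝ᵥ P *ᵥ v) := by
  have h := nmc_young hP one_pos u (-v)
  have hneg : (-v) ⬝ᵥ P *ᵥ (-v) = v ⬝ᵥ P *ᵥ v := by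
    have := nmc_smul (P := P) (-1) (-1) v v
    simpa using this
  rw [hneg] at h
  rw [sub_eq_add_neg]
  refine le_trans h (le_of_eq ?_)
  norm_num

lemma nmc_qcont : Continuous fun x : Fin n → ℝ => x ⬝ᵥ P *ᵥ x := by
  have : (fun x : Fin n → ℝ => x ⬝ᵥ P *ᵥ x) = fun x => ∑ i, x i * ∑ j, P i j * x j := by
    funext x; simp [dotProduct, Matrix.mulVec]
  rw [this]
  exact continuous_finset_sum _ fun i _ => (continuous_apply i).mul
    (continuous_finset_sum _ fun j _ => continuous_const.mul (continuous_apply j))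

lemma nmc_lam (hn : 0 < n) (hP : P.PosDef) :
    ∃ lam > (0:ℝ), ∀ x : Fin n → ℝ, lam * (∑ i, x i ^ 2) ≤ x ⬝ᵥ P *ᵥ x := by
  set S : Set (Fin n → ℝ) := {x | ∑ i, x i ^ 2 = 1} with hS_def
  have hScont : Continuous fun x : Fin n → ℝ => ∑ i, x i ^ 2 :=
    continuous_finset_sum _ fun i _ => (continuous_apply i).pow 2
  have hclosed : IsClosed S := isClosed_eq hScont continuous_const
  have hbddS : Bornology.IsBounded S := by
    rw [Metric.isBounded_iff_subset_closedBall 0]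
    refine ⟨1, fun x hx => ?_⟩
    rw [Metric.mem_closedBall, dist_zero_right]
    rw [pi_norm_le_iff_of_nonneg zero_le_one]
    intro i
    rw [Real.norm_eq_abs, abs_le]
    have h1 : x i ^ 2 ≤ 1 := by
      have : x i ^ 2 ≤ ∑ j, x j ^ 2 :=
        Finset.single_le_sum (fun j _ => sq_nonneg (x j)) (Finset.mem_univ i)
      rw [hx] at this; exact this
    constructor <;> nlinarith
  have hcompact : IsCompact S := Metric.isCompact_of_isClosed_isBounded hclosed hbddS
  have i0 : Fin n := ⟨0, hn⟩
  have hSne : S.Nonempty := by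
    refine ⟨fun j => if j = i0 then (1:ℝ) else 0,
      show (∑ i, (if i = i0 then (1:ℝ) else 0) ^ 2) = 1 from ?_⟩
    have hsq : (∑ i, (if i = i0 then (1:ℝ) else 0) ^ 2)
        = ∑ i, (if i = i0 then (1:ℝ) else 0) :=
      Finset.sum_congr rfl (fun j _ => by by_cases h : j = i0 <;> simp [h])
    rw [hsq]
    simp
  obtain ⟨x0, hx0S, hmin⟩ := hcompact.exists_isMinOn hSne (nmc_qcont (P := P)).continuousOn
  have hx0ne : x0 ≠ 0 := by
    intro h
    rw [hS_def] at hx0S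
    simp only [Set.mem_setOf_eq, h] at hx0S
    simp at hx0S
  have hlam : 0 < x0 ⬝ᵥ P *ᵥ x0 := by simpa using hP.dotProduct_mulVec_pos hx0ne
  refine ⟨x0 ⬝ᵥ P *ᵥ x0, hlam, fun x => ?_⟩
  rcases eq_or_ne x 0 with rfl | hx
  · simp
  · set r := Real.sqrt (∑ i, x i ^ 2) with hr_def
    have hsum : 0 < ∑ i, x i ^ 2 := by
      rcases Function.ne_iff.1 hx with ⟨i, hi⟩
      have : 0 < x i ^ 2 := pow_two_pos_of_ne_zero hi
      exact lt_of_lt_of_le this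
        (Finset.single_le_sum (fun j _ => sq_nonneg (x j)) (Finset.mem_univ i))
    have hr : 0 < r := Real.sqrt_pos.2 hsum
    have hr2 : r ^ 2 = ∑ i, x i ^ 2 := Real.sq_sqrt hsum.le
    have hy : r⁻¹ • x ∈ S := by
      show ∑ i, (r⁻¹ • x) i ^ 2 = 1
      have : ∑ i, (r⁻¹ • x) i ^ 2 = r⁻¹ ^ 2 * ∑ i, x i ^ 2 := by
        rw [Finset.mul_sum]; congr 1; funext i; simp [Pi.smul_apply, smul_eq_mul]; ring
      rw [this, ← hr2]
      field_simp
    have hmin' : x0 ⬝ᵥ P *ᵥ x0 ≤ (r⁻¹ • x) ⬝ᵥ P *ᵥ (r⁻¹ • x) := hmin hy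
    have hQ : (r⁻¹ • x) ⬝ᵥ P *ᵥ (r⁻¹ • x) = r⁻¹ ^ 2 * (x ⬝ᵥ P *ᵥ x) := by
      have := nmc_smul (P := P) r⁻¹ r⁻¹ x x
      simpa [pow_two] using this
    rw [hQ] at hmin'
    have : (x0 ⬝ᵥ P *ᵥ x0) * r ^ 2 ≤ x ⬝ᵥ P *ᵥ x := by
      have h2 := mul_le_mul_of_nonneg_right hmin' (sq_nonneg r)
      have : r⁻¹ ^ 2 * (x ⬝ᵥ P *ᵥ x) * r ^ 2 = x ⬝ᵥ P *ᵥ x := by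
        field_simp
      rw [this] at h2; linarith
    rw [← hr2]; linarith

end nmc_aux

lemma nmc_rec_lemma (w ε : ℕ → ℝ) (K : ℝ → ℝ)
    (hw : ∀ t, 0 ≤ w t)
    (hε : Tendsto ε atTop (nhds 0))
    (hKpos : ∀ a : ℝ, 0 < a → 0 < K a) (hK1 : ∀ a : ℝ, 0 < a → K a ≤ 1)
    (hrec : ∀ a : ℝ, 0 < a → ∀ t, w (t+1) ≤ w t - K a * (w t - a) + ε t * (w t + a + 1)) :
    Tendsto w atTop (nhds 0) := by
  have hK1pos := hKpos 1 one_pos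
  obtain ⟨T, hT⟩ : ∃ T, ∀ t ≥ T, ε t < K 1 / 4 :=
    eventually_atTop.1 (hε.eventually_lt_const (by positivity))
  set M := max (w T) 2 with hM_def
  have hM2 : (2:ℝ) ≤ M := le_max_right _ _
  have hbdd : ∀ t ≥ T, w t ≤ M := by
    intro t ht
    induction t, ht using Nat.le_induction with
    | base => exact le_max_left _ _
    | succ t ht ih =>
      have h := hrec 1 one_pos t
      have hε' := (hT t ht).le
      have h1 : (1 - K 1) * w t ≤ (1 - K 1) * M :=
        mul_le_mul_of_nonneg_left ih (by linarith [hK1 1 one_pos])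
      have h2 : ε t * (w t + 1 + 1) ≤ K 1 / 4 * (M + 2) :=
        mul_le_mul hε' (by linarith) (by linarith [hw t]) (by positivity)
      nlinarith [hK1pos, hM2]
  rw [Metric.tendsto_atTop]
  intro b hb
  set a := b/8 with ha_def
  have ha : 0 < a := by positivity
  have hKapos := hKpos a ha
  have hKa1 := hK1 a ha
  set d := K a * a / 2 with hd_def
  have hd : 0 < d := by positivity
  have hMa : (0:ℝ) < M + a + 1 := by linarith
  obtain ⟨T0, hT0⟩ : ∃ T0, ∀ t ≥ T0, ε t < d / (M + a + 1) :=
    eventually_atTop.1 (hε.eventually_lt_const (by positivity))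
  set T' := max T T0 with hT'_def
  have hεb : ∀ t ≥ T', ε t * (w t + a + 1) ≤ d := by
    intro t ht
    have hwM := hbdd t (le_trans (le_max_left _ _) ht)
    calc ε t * (w t + a + 1) ≤ d / (M + a + 1) * (M + a + 1) :=
          mul_le_mul (hT0 t (le_trans (le_max_right _ _) ht)).le (by linarith)
            (by linarith [hw t]) (by positivity)
      _ = d := div_mul_cancel₀ _ (ne_of_gt hMa)
  have hdec : ∀ t ≥ T', 2*a ≤ w t → w (t+1) ≤ w t - d := by
    intro t ht h2a
    have h := hrec a ha t
    have h2 := hεb t ht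
    nlinarith [mul_le_mul_of_nonneg_left (show a ≤ w t - a by linarith) hKapos.le]
  have hsmall : ∀ t ≥ T', w t ≤ 2*a → w (t+1) ≤ 4*a := by
    intro t ht hle
    have h := hrec a ha t
    have h2 := hεb t ht
    nlinarith [mul_le_mul_of_nonneg_left (show -a ≤ w t - a by linarith [hw t]) hKapos.le,
      mul_le_mul_of_nonneg_right hKa1 ha.le]
  have hhit : ∃ t0 ≥ T', w t0 ≤ 2*a := by
    by_contra hcon
    push_neg at hcon
    have hstep : ∀ m : ℕ, w (T' + m) ≤ w T' - m * d := by
      intro m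
      induction m with
      | zero => simp
      | succ m ih =>
        have ht : T' + m ≥ T' := Nat.le_add_right _ _
        have h1 := hdec (T' + m) ht (hcon _ ht).le
        have h2 : w (T' + (m+1)) ≤ w T' - m * d - d := by
          rw [show T' + (m+1) = (T' + m) + 1 by ring]; linarith
        push_cast
        linarith
    obtain ⟨m, hm⟩ := exists_nat_gt (w T' / d)
    have h1 := hstep m
    have h2 := hw (T' + m)
    have h3 : w T' < m * d := by
      rw [div_lt_iff₀ hd] at hm; linarith
    linarith
  obtain ⟨t0, ht0T, ht0⟩ := hhit
  have hinv : ∀ t ≥ t0, w t ≤ 4*a := by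
    intro t ht
    induction t, ht using Nat.le_induction with
    | base => linarith
    | succ t ht ih =>
      have htT' : t ≥ T' := le_trans ht0T ht
      by_cases hc : w t ≤ 2*a
      · exact hsmall t htT' hc
      · have := hdec t htT' (by linarith)
        linarith
  refine ⟨t0, fun t ht => ?_⟩
  have := hinv t ht
  rw [Real.dist_eq, sub_zero, abs_of_nonneg (hw t)]
  linarith

set_option maxHeartbeats 1000000 in
/-- Main stability theorem: for the stochastic system `e_{t+1} = A(e_t) e_t + ξ_t` with
conditionally centered noise whose conditional second moment bound `σ_t² → 0`, a state
dependent contraction `A(v)ᵀ P A(v) ⪯ (1 - c(v)) P` with `c : ℝ^p → [0,1)` continuous,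
and a convex rate function `f` with `f 0 = 0`, `f > 0` on `(0,∞)`, `c(e)V(e) ≥ f(V(e))`
for the Lyapunov function `V(e) = eᵀ P e`, the error vanishes in probability:
for every `δ > 0`, `limsup_{t→∞} P(‖e_t‖ > δ) = 0`. -/
theorem no_model_collapse {Ω : Type*} {m0 : MeasurableSpace Ω}
    (μ : Measure Ω) [IsProbabilityMeasure μ]
    (F : MeasureTheory.Filtration ℕ m0)
    (n : ℕ) (P : Matrix (Fin n) (Fin n) ℝ) (hP : P.PosDef)
    (A : (Fin n → ℝ) → Matrix (Fin n) (Fin n) ℝ)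
    (c : (Fin n → ℝ) → ℝ) (hccont : Continuous c)
    (hcrange : ∀ v, 0 ≤ c v ∧ c v < 1)
    (f : ℝ → ℝ)
    (hfconv : ConvexOn ℝ (Set.Ici (0:ℝ)) f)
    (hf0 : f 0 = 0) (hfpos : ∀ r : ℝ, 0 < r → 0 < f r)
    (hcf : ∀ v : Fin n → ℝ, c v * (v ⬝ᵥ P.mulVec v) ≥ f (v ⬝ᵥ P.mulVec v))
    (e ξ : ℕ → Ω → (Fin n → ℝ))
    (hadapted : ∀ t, StronglyMeasurable[F t] (e t))
    (hξmeas : ∀ t, Measurable (ξ t))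
    (hdyn : ∀ t ω, e (t + 1) ω = A (e t ω) *ᵥ e t ω + ξ t ω)
    (σsq : ℕ → ℝ) (hσpos : ∀ t, 0 < σsq t)
    (hσ0 : Filter.Tendsto σsq Filter.atTop (nhds 0))
    (hnoise_mean : ∀ t i, μ[fun ω => ξ t ω i | F t] =ᵐ[μ] 0)
    (hnoise_var : ∀ t, ∀ᵐ ω ∂μ,
      (μ[fun ω' => ξ t ω' ⬝ᵥ P.mulVec (ξ t ω') | F t]) ω ≤ σsq t)
    (hcontract : ∀ v x : Fin n → ℝ,
      (A v *ᵥ x) ⬝ᵥ P.mulVec (A v *ᵥ x) ≤ (1 - c v) * (x ⬝ᵥ P.mulVec x))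
    (hint : ∀ t, Integrable (fun ω => e t ω ⬝ᵥ P.mulVec (e t ω)) μ) :
    ∀ δ : ℝ, 0 < δ →
      Filter.limsup
        (fun t => (μ {ω | Real.sqrt (∑ i, e t ω i ^ 2) > δ}).toReal)
        Filter.atTop = 0 := by
  intro δ hδ
  rcases Nat.eq_zero_or_pos n with hn0 | hn
  · -- trivial case `n = 0`
    subst hn0
    have hset : ∀ t, {ω | Real.sqrt (∑ i, e t ω i ^ 2) > δ} = (∅ : Set Ω) := by
      intro t
      ext ω
      simp only [Set.mem_setOf_eq, Set.mem_empty_iff_false, iff_false, gt_iff_lt, not_lt]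
      rw [Finset.univ_eq_empty, Finset.sum_empty, Real.sqrt_zero]
      exact hδ.le
    have : (fun t => (μ {ω | Real.sqrt (∑ i, e t ω i ^ 2) > δ}).toReal) = fun _ => (0:ℝ) := by
      funext t; rw [hset t]; simp
    rw [this]
    exact limsup_const 0
  -- main case
  obtain ⟨lam, hlam, hlamle⟩ := nmc_lam hn hP
  have hVnn : ∀ t (ω : Ω), 0 ≤ e t ω ⬝ᵥ P *ᵥ e t ω := fun t ω => nmc_nonneg hP _
  set w : ℕ → ℝ := fun t => ∫ ω, e t ω ⬝ᵥ P *ᵥ e t ω ∂μ with hw_def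
  have hw0 : ∀ t, 0 ≤ w t := fun t => integral_nonneg (fun ω => hVnn t ω)
  have hemeas : ∀ t, Measurable (e t) := fun t => ((hadapted t).mono (F.le t)).measurable
  have hVmeas : ∀ t, Measurable (fun ω => e t ω ⬝ᵥ P *ᵥ e t ω) := fun t =>
    (nmc_qcont (P := P)).measurable.comp (hemeas t)
  -- basic properties of f
  have hfnn : ∀ r : ℝ, 0 ≤ r → 0 ≤ f r := by
    intro r hr
    rcases hr.eq_or_lt with h | h
    · rw [← h, hf0]
    · exact (hfpos r h).le
  have hfle : ∀ a : ℝ, 0 < a → f a ≤ a := by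
    intro a ha
    have i0 : Fin n := ⟨0, hn⟩
    set x1 : Fin n → ℝ := fun j => if j = i0 then (1:ℝ) else 0 with hx1_def
    have hx1ne : x1 ≠ 0 := by
      intro h
      have : x1 i0 = 0 := by rw [h]; rfl
      simp [hx1_def] at this
    have hq1 : 0 < x1 ⬝ᵥ P *ᵥ x1 := by simpa using hP.dotProduct_mulVec_pos hx1ne
    set v : Fin n → ℝ := Real.sqrt (a / (x1 ⬝ᵥ P *ᵥ x1)) • x1 with hv_def
    have hQv : v ⬝ᵥ P *ᵥ v = a := by
      rw [hv_def, nmc_smul]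
      rw [Real.mul_self_sqrt (by positivity)]
      field_simp
    have h := hcf v
    rw [hQv] at h
    have hc := hcrange v
    nlinarith
  have hKpos : ∀ a : ℝ, 0 < a → 0 < f a / a := fun a ha => div_pos (hfpos a ha) ha
  have hK1 : ∀ a : ℝ, 0 < a → f a / a ≤ 1 := fun a ha => (div_le_one ha).2 (hfle a ha)
  have hchord : ∀ a : ℝ, 0 < a → ∀ v : ℝ, 0 ≤ v → f a / a * (v - a) ≤ f v := by
    intro a ha v hv
    rcases lt_or_ge v a with hva | hav
    · have h1 : 0 ≤ f a / a := (hKpos a ha).le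
      have h2 : v - a ≤ 0 := by linarith
      exact le_trans (mul_nonpos_of_nonneg_of_nonpos h1 h2) (hfnn v hv)
    · have hv0 : 0 < v := lt_of_lt_of_le ha hav
      have ha1 : 0 ≤ a / v := by positivity
      have ha2 : 0 ≤ 1 - a / v := by
        have : a / v ≤ 1 := (div_le_one hv0).2 hav
        linarith
      have h := hfconv.2 (Set.mem_Ici.2 hv) (Set.mem_Ici.2 (le_refl (0:ℝ))) ha1 ha2 (by ring)
      simp only [smul_eq_mul, mul_zero, add_zero] at h
      rw [div_mul_cancel₀ a (ne_of_gt hv0), hf0, mul_zero, add_zero] at h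
      -- h : f a ≤ a / v * f v
      have key : f a / a * v ≤ f v := by
        rw [div_mul_eq_mul_div, div_le_iff₀ ha]
        have hmul := mul_le_mul_of_nonneg_right h hv0.le
        have heq : a / v * f v * v = f v * a := by field_simp
        rw [heq] at hmul
        linarith
      have step : f a / a * (v - a) ≤ f a / a * v :=
        mul_le_mul_of_nonneg_left (by linarith) (hKpos a ha).le
      linarith
  -- the perturbation sequence
  set ε : ℕ → ℝ := fun t => Real.sqrt (σsq t) + σsq t + σsq t * Real.sqrt (σsq t)
      + σsq t * σsq t with hε_def
  have hsqrt0 : Tendsto (fun t => Real.sqrt (σsq t)) atTop (nhds 0) := by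
    have h := (Real.continuous_sqrt.tendsto 0).comp hσ0
    simpa [Function.comp_def] using h
  have hε0 : Tendsto ε atTop (nhds 0) := by
    have h := ((hsqrt0.add hσ0).add (hσ0.mul hsqrt0)).add (hσ0.mul hσ0)
    norm_num at h
    exact h
  -- the key recursion
  have hrec : ∀ a : ℝ, 0 < a → ∀ t,
      w (t+1) ≤ w t - (f a / a) * (w t - a) + ε t * (w t + a + 1) := by
    intro a ha t
    have hσt := hσpos t
    have hr : 0 < Real.sqrt (σsq t) := Real.sqrt_pos.2 hσt
    set r := Real.sqrt (σsq t) with hr_def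
    have hr2 : r ^ 2 = σsq t := Real.sq_sqrt hσt.le
    have hs : 0 < Real.sqrt r := Real.sqrt_pos.2 hr
    have hs2 : Real.sqrt r ^ 2 = r := Real.sq_sqrt hr.le
    -- pointwise bound
    have hpt : ∀ ω, e (t+1) ω ⬝ᵥ P *ᵥ e (t+1) ω ≤
        (1 + r) * ((1 - c (e t ω)) * (e t ω ⬝ᵥ P *ᵥ e t ω))
        + (1 + r⁻¹) * (ξ t ω ⬝ᵥ P *ᵥ ξ t ω) := by
      intro ω
      have hy := nmc_young hP hs (A (e t ω) *ᵥ e t ω) (ξ t ω)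
      rw [hs2] at hy
      rw [← hdyn t ω] at hy
      have hcon := hcontract (e t ω) (e t ω)
      have h1r : (0:ℝ) ≤ 1 + r := by linarith
      have := mul_le_mul_of_nonneg_left hcon h1r
      linarith
    -- integrability facts
    have hξQmeas : Measurable (fun ω => ξ t ω ⬝ᵥ P *ᵥ ξ t ω) :=
      (nmc_qcont (P := P)).measurable.comp (hξmeas t)
    have hQu_le : ∀ ω, (A (e t ω) *ᵥ e t ω) ⬝ᵥ P *ᵥ (A (e t ω) *ᵥ e t ω)
        ≤ e t ω ⬝ᵥ P *ᵥ e t ω := by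
      intro ω
      have h := hcontract (e t ω) (e t ω)
      have hc := hcrange (e t ω)
      nlinarith [hVnn t ω]
    have hξQ_bound : ∀ ω, ξ t ω ⬝ᵥ P *ᵥ ξ t ω ≤
        2 * (e (t+1) ω ⬝ᵥ P *ᵥ e (t+1) ω) + 2 * (e t ω ⬝ᵥ P *ᵥ e t ω) := by
      intro ω
      have hξeq : ξ t ω = e (t+1) ω - A (e t ω) *ᵥ e t ω := by
        rw [hdyn t ω, add_sub_cancel_left]
      rw [hξeq]
      refine le_trans (nmc_sub hP _ _) ?_
      linarith [hQu_le ω]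
    have hξQint : Integrable (fun ω => ξ t ω ⬝ᵥ P *ᵥ ξ t ω) μ := by
      refine Integrable.mono' (((hint (t+1)).const_mul 2).add ((hint t).const_mul 2))
        hξQmeas.aestronglyMeasurable (ae_of_all _ fun ω => ?_)
      rw [Real.norm_eq_abs, abs_of_nonneg (nmc_nonneg hP _)]
      exact hξQ_bound ω
    have hcmeas : Measurable (fun ω => c (e t ω)) := hccont.measurable.comp (hemeas t)
    have hg1int : Integrable (fun ω => (1 - c (e t ω)) * (e t ω ⬝ᵥ P *ᵥ e t ω)) μ := by
      refine Integrable.mono' (hint t)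
        ((measurable_const.sub hcmeas).mul (hVmeas t)).aestronglyMeasurable
        (ae_of_all _ fun ω => ?_)
      have hc := hcrange (e t ω)
      have hv := hVnn t ω
      rw [Real.norm_eq_abs, abs_of_nonneg (by nlinarith)]
      nlinarith
    have hcVint : Integrable (fun ω => c (e t ω) * (e t ω ⬝ᵥ P *ᵥ e t ω)) μ := by
      refine Integrable.mono' (hint t) (hcmeas.mul (hVmeas t)).aestronglyMeasurable
        (ae_of_all _ fun ω => ?_)
      have hc := hcrange (e t ω)
      have hv := hVnn t ω
      rw [Real.norm_eq_abs, abs_of_nonneg (by nlinarith)]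
      nlinarith
    -- integral bounds
    have hI1 : w (t+1) ≤ (1 + r) * ∫ ω, (1 - c (e t ω)) * (e t ω ⬝ᵥ P *ᵥ e t ω) ∂μ
        + (1 + r⁻¹) * ∫ ω, ξ t ω ⬝ᵥ P *ᵥ ξ t ω ∂μ := by
      have h := integral_mono (μ := μ)
        (f := fun ω => e (t+1) ω ⬝ᵥ P *ᵥ e (t+1) ω)
        (g := fun ω => (1 + r) * ((1 - c (e t ω)) * (e t ω ⬝ᵥ P *ᵥ e t ω))
          + (1 + r⁻¹) * (ξ t ω ⬝ᵥ P *ᵥ ξ t ω))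
        (hint (t+1))
        ((hg1int.const_mul (1+r)).add (hξQint.const_mul (1+r⁻¹))) hpt
      rwa [integral_add (hg1int.const_mul _) (hξQint.const_mul _),
        integral_const_mul, integral_const_mul] at h
    have hI2 : ∫ ω, ξ t ω ⬝ᵥ P *ᵥ ξ t ω ∂μ ≤ σsq t := by
      rw [← integral_condExp (F.le t) (f := fun ω => ξ t ω ⬝ᵥ P *ᵥ ξ t ω)]
      calc ∫ ω, (μ[fun ω' => ξ t ω' ⬝ᵥ P.mulVec (ξ t ω') | F t]) ω ∂μ
          ≤ ∫ _ω, σsq t ∂μ :=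
            integral_mono_ae integrable_condExp (integrable_const _) (hnoise_var t)
        _ = σsq t := by simp
    have hI3 : ∫ ω, (1 - c (e t ω)) * (e t ω ⬝ᵥ P *ᵥ e t ω) ∂μ
        = w t - ∫ ω, c (e t ω) * (e t ω ⬝ᵥ P *ᵥ e t ω) ∂μ := by
      have hfun : (fun ω => (1 - c (e t ω)) * (e t ω ⬝ᵥ P *ᵥ e t ω))
          = fun ω => (e t ω ⬝ᵥ P *ᵥ e t ω) - c (e t ω) * (e t ω ⬝ᵥ P *ᵥ e t ω) := by
        funext ω; ring
      rw [hfun, integral_sub (hint t) hcVint]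
    have hI4 : (f a / a) * (w t - a) ≤ ∫ ω, c (e t ω) * (e t ω ⬝ᵥ P *ᵥ e t ω) ∂μ := by
      have hpt2 : ∀ ω, (f a / a) * ((e t ω ⬝ᵥ P *ᵥ e t ω) - a)
          ≤ c (e t ω) * (e t ω ⬝ᵥ P *ᵥ e t ω) := fun ω =>
        le_trans (hchord a ha _ (hVnn t ω)) (hcf (e t ω))
      have hlin : Integrable (fun ω => (f a / a) * ((e t ω ⬝ᵥ P *ᵥ e t ω) - a)) μ := by
        exact ((hint t).sub (integrable_const a)).const_mul _
      have h := integral_mono (μ := μ)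
        (f := fun ω => (f a / a) * ((e t ω ⬝ᵥ P *ᵥ e t ω) - a))
        (g := fun ω => c (e t ω) * (e t ω ⬝ᵥ P *ᵥ e t ω))
        hlin hcVint hpt2
      rwa [integral_const_mul, integral_sub (hint t) (integrable_const a),
        integral_const, measureReal_def, measure_univ, ENNReal.toReal_one, one_smul] at h
    -- combine
    have hX : w t - (f a / a) * (w t - a) ≤ w t + a := by
      nlinarith [mul_le_mul_of_nonneg_left (show -a ≤ w t - a by linarith [hw0 t]) (hKpos a ha).le,
        mul_le_mul_of_nonneg_right (hK1 a ha) ha.le]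
    have hεt : ε t = r + r^2 + r^2 * r + r^2 * r^2 := by
      rw [hε_def]
      simp only
      rw [← hr_def, hr2]
    have hmain : w (t+1) ≤ (1 + r) * (w t - (f a / a) * (w t - a)) + (1 + r⁻¹) * r^2 := by
      have h1 : ∫ ω, (1 - c (e t ω)) * (e t ω ⬝ᵥ P *ᵥ e t ω) ∂μ
          ≤ w t - (f a / a) * (w t - a) := by rw [hI3]; linarith [hI4]
      have h1r : (0:ℝ) ≤ 1 + r := by linarith
      have h1r' : (0:ℝ) ≤ 1 + r⁻¹ := by positivity
      calc w (t+1) ≤ (1 + r) * ∫ ω, (1 - c (e t ω)) * (e t ω ⬝ᵥ P *ᵥ e t ω) ∂μ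
            + (1 + r⁻¹) * ∫ ω, ξ t ω ⬝ᵥ P *ᵥ ξ t ω ∂μ := hI1
        _ ≤ (1 + r) * (w t - (f a / a) * (w t - a)) + (1 + r⁻¹) * σsq t := by
            have hm1 := mul_le_mul_of_nonneg_left h1 h1r
            have hm2 := mul_le_mul_of_nonneg_left hI2 h1r'
            linarith
        _ = (1 + r) * (w t - (f a / a) * (w t - a)) + (1 + r⁻¹) * r^2 := by rw [hr2]
    rw [hεt]
    have hrr : (1 + r⁻¹) * r^2 = r^2 + r := by field_simp
    rw [hrr] at hmain
    have hrX : r * (w t - (f a / a) * (w t - a)) ≤ r * (w t + a) :=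
      mul_le_mul_of_nonneg_left hX hr.le
    have hwa1 : (1:ℝ) ≤ w t + a + 1 := by linarith [hw0 t]
    have h6 : (r^2 + r^2 * r + r^2 * r^2) * 1 ≤ (r^2 + r^2 * r + r^2 * r^2) * (w t + a + 1) :=
      mul_le_mul_of_nonneg_left hwa1 (by positivity)
    have hsplit : (r + r^2 + r^2*r + r^2*r^2) * (w t + a + 1)
        = r * (w t + a) + r + (r^2 + r^2*r + r^2*r^2) * (w t + a + 1) := by ring
    have h8 : (0:ℝ) ≤ r^2 * r := by positivity
    have h9 : (0:ℝ) ≤ r^2 * r^2 := by positivity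
    linarith [hmain, hrX, h6, hsplit, h8, h9]
  -- conclude convergence of w
  have hw_tendsto : Tendsto w atTop (nhds 0) :=
    nmc_rec_lemma w ε (fun a => f a / a) hw0 hε0 hKpos hK1 hrec
  -- Markov's inequality
  have hld : 0 < lam * δ^2 := by positivity
  have hbound : ∀ t, (μ {ω | Real.sqrt (∑ i, e t ω i ^ 2) > δ}).toReal
      ≤ w t / (lam * δ^2) := by
    intro t
    have hsub : {ω | Real.sqrt (∑ i, e t ω i ^ 2) > δ}
        ⊆ {ω | lam * δ^2 ≤ e t ω ⬝ᵥ P *ᵥ e t ω} := by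
      intro ω hω
      simp only [Set.mem_setOf_eq, gt_iff_lt] at hω ⊢
      have hsum_nn : 0 ≤ ∑ i, e t ω i ^ 2 := Finset.sum_nonneg fun i _ => sq_nonneg _
      have h1 : δ^2 < ∑ i, e t ω i ^ 2 := by
        have h2 : δ^2 < (Real.sqrt (∑ i, e t ω i ^ 2))^2 := by
          have := pow_lt_pow_left₀ hω hδ.le (n := 2) (by norm_num)
          exact this
        rwa [Real.sq_sqrt hsum_nn] at h2
      calc lam * δ^2 ≤ lam * ∑ i, e t ω i ^ 2 := mul_le_mul_of_nonneg_left h1.le hlam.le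
        _ ≤ e t ω ⬝ᵥ P *ᵥ e t ω := hlamle _
    have hmarkov := mul_meas_ge_le_integral_of_nonneg
      (ae_of_all μ fun ω => hVnn t ω) (hint t) (lam * δ^2)
    have hmono : (μ {ω | Real.sqrt (∑ i, e t ω i ^ 2) > δ}).toReal
        ≤ (μ {ω | lam * δ^2 ≤ e t ω ⬝ᵥ P *ᵥ e t ω}).toReal :=
      ENNReal.toReal_mono (measure_ne_top μ _) (measure_mono hsub)
    rw [le_div_iff₀ hld]
    rw [measureReal_def] at hmarkov
    nlinarith [mul_le_mul_of_nonneg_left hmono hld.le, hmarkov]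
  have hdiv : Tendsto (fun t => w t / (lam * δ^2)) atTop (nhds 0) := by
    have := hw_tendsto.div_const (lam * δ^2)
    rwa [zero_div] at this
  have htend : Tendsto (fun t => (μ {ω | Real.sqrt (∑ i, e t ω i ^ 2) > δ}).toReal)
      atTop (nhds 0) :=
    tendsto_of_tendsto_of_tendsto_of_le_of_le tendsto_const_nhds hdiv
      (fun t => ENNReal.toReal_nonneg) hbound
  exact htend.limsup_eq
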